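/- For every n ≥ 1, the number of explicit λυ-substitutions of size n equals the partial sum of Catalan numbers ∑_{j=0}^{n−1} C_j; equivalently, the ordinary generating function S(z) of λυ-substitutions counted by size satisfies S(z) = ((1 − √(1 − 4z))/(2z))·(z/(1 − z)). -/
import Mathlib


mutual
/-- λυ-terms in de Bruijn notation, with explicit closures. -/
inductive LTerm : Type
  | idx : Nat → LTerm
  | lam : LTerm → LTerm
  | app : LTerm → LTerm → LTerm
  | clos : LTerm → LSub → LTerm
  deriving DecidableEq

/-- explicit λυ-substitutions. -/
inductive LSub : Type
  | slash : LTerm → LSub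
  | lift : LSub → LSub
  | shift : LSub
  deriving DecidableEq
end

mutual
/-- natural size of a λυ-term: the number of constructors (|idx n| = n+1). -/
def LTerm.size : LTerm → Nat
  | .idx n => n + 1
  | .lam a => 1 + a.size
  | .app a b => 1 + a.size + b.size
  | .clos a s => 1 + a.size + s.size

/-- natural size of a substitution. -/
def LSub.size : LSub → Nat
  | .slash a => 1 + a.size
  | .lift s => 1 + s.size
  | .shift => 1
end

/-- a λυ-term is pure if it contains no closure; pure terms are exactly the ψ-normal forms. -/
def LTerm.IsPure : LTerm → Prop
  | .idx _ => True
  | .lam a => a.IsPure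
  | .app a b => a.IsPure ∧ b.IsPure
  | .clos _ _ => False

/-- one normal-order (leftmost-outermost) ψ-reduction step. -/
inductive NStep : LTerm → LTerm → Prop
  /-- (App) (ab)[s] → a[s](b[s]) -/
  | appS (a b : LTerm) (s : LSub) :
      NStep (.clos (.app a b) s) (.app (.clos a s) (.clos b s))
  /-- (Lambda) (λa)[s] → λ(a[⇑(s)]) -/
  | lamS (a : LTerm) (s : LSub) :
      NStep (.clos (.lam a) s) (.lam (.clos a (.lift s)))
  /-- (FVar) 0[a/] → a -/
  | fvar (a : LTerm) : NStep (.clos (.idx 0) (.slash a)) a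
  /-- (RVar) (S n)[a/] → n -/
  | rvar (n : Nat) (a : LTerm) : NStep (.clos (.idx (n+1)) (.slash a)) (.idx n)
  /-- (FVarLift) 0[⇑(s)] → 0 -/
  | fvarLift (s : LSub) : NStep (.clos (.idx 0) (.lift s)) (.idx 0)
  /-- (RVarLift) (S n)[⇑(s)] → n[s][↑] -/
  | rvarLift (n : Nat) (s : LSub) :
      NStep (.clos (.idx (n+1)) (.lift s)) (.clos (.clos (.idx n) s) .shift)
  /-- (VarShift) n[↑] → S n -/
  | varShift (n : Nat) : NStep (.clos (.idx n) .shift) (.idx (n+1))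
  /-- reduce under an abstraction -/
  | lamCong {a a' : LTerm} : NStep a a' → NStep (.lam a) (.lam a')
  /-- reduce in the left part of an application -/
  | appLeft {a a' : LTerm} (b : LTerm) : NStep a a' → NStep (.app a b) (.app a' b)
  /-- reduce in the right part of an application, provided the left part is normal -/
  | appRight {b b' : LTerm} (a : LTerm) :
      a.IsPure → NStep b b' → NStep (.app a b) (.app a b')
  /-- reduce in the body of a closure, provided the closure is not itself a ψ-redex,
      i.e. its body is again a closure -/
  | closCong {t t' : LTerm} (s : LSub) :
      (∃ u v, t = LTerm.clos u v) → NStep t t' → NStep (.clos t s) (.clos t' s)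

/-- `NormIn t k` : `t` reaches its ψ-normal form in exactly `k` normal-order
ψ-reduction steps (written t ↓_k). -/
inductive NormIn : LTerm → Nat → Prop
  | base {t : LTerm} : t.IsPure → NormIn t 0
  | step {t t' : LTerm} {k : Nat} : NStep t t' → NormIn t' k → NormIn t (k+1)

lemma LTerm.size_pos (t : LTerm) : 1 ≤ t.size := by
  cases t <;> simp [LTerm.size] <;> omega

lemma LSub.size_pos (s : LSub) : 1 ≤ s.size := by
  cases s <;> simp [LSub.size] <;> omega

def TS : Nat → Finset LTerm × Finset LSub
  | 0 => (∅, ∅)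
  | (n+1) =>
    ( {LTerm.idx n} ∪ (TS n).1.image .lam
        ∪ (Finset.range (n+1)).biUnion (fun i => ((TS (min i n)).1 ×ˢ (TS (n-i)).1).image (fun p => LTerm.app p.1 p.2))
        ∪ (Finset.range (n+1)).biUnion (fun i => ((TS (min i n)).1 ×ˢ (TS (n-i)).2).image (fun p => LTerm.clos p.1 p.2)),
      (TS n).1.image .slash ∪ (TS n).2.image .lift ∪ (if n = 0 then {LSub.shift} else ∅) )
decreasing_by all_goals omega

lemma TS_succ_fst (n : ℕ) : (TS (n+1)).1 =
    {LTerm.idx n} ∪ (TS n).1.image .lam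
      ∪ (Finset.range (n+1)).biUnion (fun i => ((TS i).1 ×ˢ (TS (n-i)).1).image (fun p => LTerm.app p.1 p.2))
      ∪ (Finset.range (n+1)).biUnion (fun i => ((TS i).1 ×ˢ (TS (n-i)).2).image (fun p => LTerm.clos p.1 p.2)) := by
  rw [TS]
  dsimp only
  congr 1
  · congr 1
    apply Finset.biUnion_congr rfl
    intro i hi
    rw [Finset.mem_range] at hi
    rw [Nat.min_eq_left (by omega)]
  · apply Finset.biUnion_congr rfl
    intro i hi
    rw [Finset.mem_range] at hi
    rw [Nat.min_eq_left (by omega)]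

lemma TS_succ_snd (n : ℕ) : (TS (n+1)).2 =
    (TS n).1.image .slash ∪ (TS n).2.image .lift ∪ (if n = 0 then {LSub.shift} else ∅) := by rw [TS]

lemma mem_TS : ∀ n, (∀ t : LTerm, t ∈ (TS n).1 ↔ t.size = n) ∧ (∀ s : LSub, s ∈ (TS n).2 ↔ s.size = n) := by
  intro n
  induction n using Nat.strong_induction_on with
  | _ n ih =>
    match n with
    | 0 =>
      constructor
      · intro t; simp [TS]; have := t.size_pos; omega
      · intro s; simp [TS]; have := s.size_pos; omega
    | (m+1) =>
      constructor
      · intro t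
        rw [TS_succ_fst]
        simp only [Finset.mem_union, Finset.mem_singleton, Finset.mem_image,
          Finset.mem_biUnion, Finset.mem_range, Finset.mem_product, Prod.exists]
        constructor
        · rintro (((rfl | ⟨a, ha, rfl⟩) | ⟨i, hi, a, b, ⟨ha, hb⟩, rfl⟩) | ⟨i, hi, a, s, ⟨ha, hs⟩, rfl⟩)
          · simp [LTerm.size]
          · have := ((ih m (by omega)).1 a).mp ha
            simp [LTerm.size]; omega
          · have h1 := ((ih i (by omega)).1 a).mp ha
            have h2 := ((ih (m - i) (by omega)).1 b).mp hb
            have hb1 := b.size_pos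
            simp [LTerm.size]; omega
          · have h1 := ((ih i (by omega)).1 a).mp ha
            have h2 := ((ih (m - i) (by omega)).2 s).mp hs
            have hs1 := s.size_pos
            simp [LTerm.size]; omega
        · intro ht
          match t, ht with
          | .idx k, ht =>
            left; left; left
            simp [LTerm.size] at ht
            exact congrArg LTerm.idx (by omega)
          | .lam a, ht =>
            left; left; right
            simp [LTerm.size] at ht
            exact ⟨a, ((ih m (by omega)).1 a).mpr (by omega), rfl⟩
          | .app a b, ht =>
            left; right
            simp [LTerm.size] at ht
            have ha1 := a.size_pos; have hb1 := b.size_pos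
            refine ⟨a.size, by omega, a, b, ⟨((ih a.size (by omega)).1 a).mpr rfl,
              ((ih (m - a.size) (by omega)).1 b).mpr (by omega)⟩, rfl⟩
          | .clos a s, ht =>
            right
            simp [LTerm.size] at ht
            have ha1 := a.size_pos; have hs1 := s.size_pos
            refine ⟨a.size, by omega, a, s, ⟨((ih a.size (by omega)).1 a).mpr rfl,
              ((ih (m - a.size) (by omega)).2 s).mpr (by omega)⟩, rfl⟩
      · intro s
        rw [TS_succ_snd]
        simp only [Finset.mem_union, Finset.mem_image]
        constructor
        · rintro ((⟨a, ha, rfl⟩ | ⟨u, hu, rfl⟩) | h)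
          · have := ((ih m (by omega)).1 a).mp ha
            simp [LSub.size]; omega
          · have := ((ih m (by omega)).2 u).mp hu
            simp [LSub.size]; omega
          · split at h
            · simp at h; subst h; simp [LSub.size]; omega
            · simp at h
        · intro hs
          match s, hs with
          | .slash a, hs =>
            left; left
            simp [LSub.size] at hs
            exact ⟨a, ((ih m (by omega)).1 a).mpr (by omega), rfl⟩
          | .lift u, hs =>
            left; right
            simp [LSub.size] at hs
            exact ⟨u, ((ih m (by omega)).2 u).mpr (by omega), rfl⟩
          | .shift, hs =>
            right
            simp [LSub.size] at hs
            simp [hs.symm]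

lemma card_TS_snd (n : ℕ) :
    (TS (n+1)).2.card = (TS n).1.card + (TS n).2.card + (if n = 0 then 1 else 0) := by
  rw [TS_succ_snd]
  rw [Finset.card_union_of_disjoint, Finset.card_union_of_disjoint,
      Finset.card_image_of_injective _ (fun a b h => by cases h; rfl),
      Finset.card_image_of_injective _ (fun a b h => by cases h; rfl)]
  · split <;> simp
  · simp [Finset.disjoint_left]
  · split <;> simp [Finset.disjoint_left] <;>
      rintro x (⟨a, _, rfl⟩ | ⟨a, _, rfl⟩) <;> simp

lemma card_TS_fst (n : ℕ) :
    (TS (n+1)).1.card = 1 + (TS n).1.card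
      + ∑ i ∈ Finset.range (n+1), (TS i).1.card * (TS (n-i)).1.card
      + ∑ i ∈ Finset.range (n+1), (TS i).1.card * (TS (n-i)).2.card := by
  have happinj : Function.Injective (fun p : LTerm × LTerm => LTerm.app p.1 p.2) := by
    rintro ⟨a, b⟩ ⟨c, d⟩ h; simpa [Prod.ext_iff] using h
  have hclosinj : Function.Injective (fun p : LTerm × LSub => LTerm.clos p.1 p.2) := by
    rintro ⟨a, b⟩ ⟨c, d⟩ h; simpa [Prod.ext_iff] using h
  have happ : ∀ x ∈ Finset.range (n+1), ∀ y ∈ Finset.range (n+1), x ≠ y →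
      Disjoint (((TS x).1 ×ˢ (TS (n-x)).1).image (fun p => LTerm.app p.1 p.2))
        (((TS y).1 ×ˢ (TS (n-y)).1).image (fun p => LTerm.app p.1 p.2)) := by
    intro x _ y _ hxy
    simp only [Finset.disjoint_left, Finset.mem_image, Finset.mem_product, Prod.exists,
      not_exists, not_and]
    rintro t ⟨a, b, ⟨ha, hb⟩, rfl⟩ c d ⟨hc, hd⟩ h
    simp only [LTerm.app.injEq] at h
    obtain ⟨rfl, rfl⟩ := h
    exact hxy (by rw [← ((mem_TS _).1 _).mp ha, ← ((mem_TS _).1 _).mp hc])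
  have hclos : ∀ x ∈ Finset.range (n+1), ∀ y ∈ Finset.range (n+1), x ≠ y →
      Disjoint (((TS x).1 ×ˢ (TS (n-x)).2).image (fun p => LTerm.clos p.1 p.2))
        (((TS y).1 ×ˢ (TS (n-y)).2).image (fun p => LTerm.clos p.1 p.2)) := by
    intro x _ y _ hxy
    simp only [Finset.disjoint_left, Finset.mem_image, Finset.mem_product, Prod.exists,
      not_exists, not_and]
    rintro t ⟨a, b, ⟨ha, hb⟩, rfl⟩ c d ⟨hc, hd⟩ h
    simp only [LTerm.clos.injEq] at h
    obtain ⟨rfl, rfl⟩ := h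
    exact hxy (by rw [← ((mem_TS _).1 _).mp ha, ← ((mem_TS _).1 _).mp hc])
  have h1 : ∑ i ∈ Finset.range (n+1),
        (((TS i).1 ×ˢ (TS (n-i)).1).image (fun p => LTerm.app p.1 p.2)).card
      = ∑ i ∈ Finset.range (n+1), (TS i).1.card * (TS (n-i)).1.card :=
    Finset.sum_congr rfl (fun i _ => by
      rw [Finset.card_image_of_injective _ happinj, Finset.card_product])
  have h2 : ∑ i ∈ Finset.range (n+1),
        (((TS i).1 ×ˢ (TS (n-i)).2).image (fun p => LTerm.clos p.1 p.2)).card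
      = ∑ i ∈ Finset.range (n+1), (TS i).1.card * (TS (n-i)).2.card :=
    Finset.sum_congr rfl (fun i _ => by
      rw [Finset.card_image_of_injective _ hclosinj, Finset.card_product])
  rw [TS_succ_fst]
  rw [Finset.card_union_of_disjoint, Finset.card_union_of_disjoint,
      Finset.card_union_of_disjoint, Finset.card_singleton,
      Finset.card_image_of_injective _ (fun a b h => by cases h; rfl),
      Finset.card_biUnion happ, Finset.card_biUnion hclos, h1, h2]
  · rw [Finset.disjoint_left]
    intro t ht1 ht2
    simp only [Finset.mem_image] at ht2
    obtain ⟨a, _, rfl⟩ := ht2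
    simp at ht1
  · rw [Finset.disjoint_left]
    intro t ht1 ht2
    simp only [Finset.mem_biUnion, Finset.mem_image, Prod.exists] at ht2
    obtain ⟨i, _, a, b, _, rfl⟩ := ht2
    simp at ht1
  · rw [Finset.disjoint_left]
    intro t ht1 ht2
    simp only [Finset.mem_biUnion, Finset.mem_image, Prod.exists] at ht2
    obtain ⟨i, _, a, s, _, rfl⟩ := ht2
    simp at ht1

lemma catalan_succ_range (n : ℕ) :
    catalan (n+1) = ∑ i ∈ Finset.range (n+1), catalan i * catalan (n-i) := by
  rw [catalan_succ, Fin.sum_univ_eq_sum_range (fun i => catalan i * catalan (n - i)) (n+1)]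

lemma catalan_shift (m : ℕ) :
    catalan (m+2) = catalan (m+1) + ∑ i ∈ Finset.range (m+1), catalan (i+1) * catalan (m-i) := by
  rw [catalan_succ_range (m+1), Finset.sum_range_succ']
  simp [Nat.succ_sub_succ, add_comm]

lemma catalan_key : ∀ m, catalan (m+1)
    = 1 + ∑ i ∈ Finset.range m, catalan (i+1) * ∑ j ∈ Finset.range (m-i), catalan j := by
  intro m
  induction m with
  | zero => simp [catalan_one]
  | succ m ih =>
    have step : ∑ i ∈ Finset.range (m+1), catalan (i+1) * ∑ j ∈ Finset.range (m+1-i), catalan j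
        = (∑ i ∈ Finset.range (m+1), catalan (i+1) * ∑ j ∈ Finset.range (m-i), catalan j)
          + ∑ i ∈ Finset.range (m+1), catalan (i+1) * catalan (m-i) := by
      rw [← Finset.sum_add_distrib]
      apply Finset.sum_congr rfl
      intro i hi
      rw [Finset.mem_range] at hi
      rw [show m + 1 - i = (m - i) + 1 by omega, Finset.sum_range_succ, mul_add]
    have drop : ∑ i ∈ Finset.range (m+1), catalan (i+1) * ∑ j ∈ Finset.range (m-i), catalan j
        = ∑ i ∈ Finset.range m, catalan (i+1) * ∑ j ∈ Finset.range (m-i), catalan j := by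
      rw [Finset.sum_range_succ]; simp
    have hs := catalan_shift m
    rw [show m + 2 = m + 1 + 1 by omega] at hs
    rw [step, drop]
    omega

lemma TS_card : ∀ n, (TS (n+1)).1.card = catalan (n+1)
    ∧ (TS (n+1)).2.card = ∑ j ∈ Finset.range (n+1), catalan j := by
  intro n
  induction n using Nat.strong_induction_on with
  | _ n ih =>
    have F0 : (TS 0).1.card = 0 := by simp [TS]
    have G0 : (TS 0).2.card = 0 := by simp [TS]
    match n with
    | 0 =>
      constructor
      · rw [card_TS_fst]; simp [F0, G0, catalan_one]
      · rw [card_TS_snd]; simp [F0, G0]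
    | (m+1) =>
      have ihm := ih m (by omega)
      constructor
      · rw [card_TS_fst]
        have e1 : ∑ i ∈ Finset.range (m+2), (TS i).1.card * (TS (m+1-i)).1.card
            = ∑ i ∈ Finset.range m, catalan (i+1) * catalan (m-i) := by
          rw [Finset.sum_range_succ', F0, Finset.sum_range_succ]
          simp only [Nat.zero_mul, add_zero, Nat.add_sub_cancel, Nat.sub_self, F0, Nat.mul_zero]
          apply Finset.sum_congr rfl
          intro i hi
          rw [Finset.mem_range] at hi
          rw [(ih i (by omega)).1, show m + 1 - (i+1) = (m - i - 1) + 1 by omega,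
              (ih (m - i - 1) (by omega)).1, show m - i - 1 + 1 = m - i by omega]
        have e2 : ∑ i ∈ Finset.range (m+2), (TS i).1.card * (TS (m+1-i)).2.card
            = ∑ i ∈ Finset.range m, catalan (i+1) * ∑ j ∈ Finset.range (m-i), catalan j := by
          rw [Finset.sum_range_succ', F0, Finset.sum_range_succ]
          simp only [Nat.zero_mul, add_zero, Nat.add_sub_cancel, Nat.sub_self, G0, Nat.mul_zero]
          apply Finset.sum_congr rfl
          intro i hi
          rw [Finset.mem_range] at hi
          rw [(ih i (by omega)).1, show m + 1 - (i+1) = (m - i - 1) + 1 by omega,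
              (ih (m - i - 1) (by omega)).2, show m - i - 1 + 1 = m - i by omega]
        rw [e1, e2, ihm.1, show m + 1 + 1 = m + 2 by omega]
        have hs := catalan_shift m
        have hk := catalan_key m
        rw [Finset.sum_range_succ] at hs
        simp only [Nat.sub_self, catalan_zero, Nat.mul_one] at hs
        omega
      · rw [card_TS_snd, ihm.1, ihm.2, Finset.sum_range_succ (n := m+1)]
        simp
        omega

/-- For every n ≥ 1, the number of explicit λυ-substitutions of size n equals
the partial sum of Catalan numbers ∑_{j=0}^{n−1} C_j; equivalently, the
ordinary generating function of λυ-substitutions by size is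
S(z) = ((1 − √(1−4z))/(2z))·(z/(1−z)). -/
theorem card_luSubs_eq_catalan_partial_sum (n : Nat) (hn : 1 ≤ n) :
    Nat.card {s : LSub // s.size = n} = ∑ j ∈ Finset.range n, catalan j := by
  obtain ⟨m, rfl⟩ : ∃ m, n = m + 1 := ⟨n - 1, by omega⟩
  rw [← (TS_card m).2]
  rw [Nat.card_congr (Equiv.subtypeEquivRight (fun s => ((mem_TS (m+1)).2 s).symm))]
  exact Nat.card_eq_finsetCard _
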